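/- The joint cumulant generating function of n values of the canonical Gaussian OU∧ process is: C{θ ‡ (Y_{t₁}(x₁),...,Y_{t_n}(x_n))} = i(2cμ/λ²) Σᵢ θ̃ᵢ − (cτ²/(4λ²)) Σ_{i,j} θ̃ᵢθ̃ⱼ min(exp(-λ|tᵢ-tⱼ|), exp(-λ|xᵢ-xⱼ|/c)), where θ̃ᵢ = θθᵢ. In particular the vector (Y_{t₁}(x₁),...,Y_{t_n}(x_n)) is multivariate normal with common mean 2cμ/λ² and covariance matrix Σᵢⱼ = (cτ²/(2λ²)) min(exp(-λ|tᵢ-tⱼ|), exp(-λ|xᵢ-xⱼ|/c)). -/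

import Mathlib

open MeasureTheory Real

open Set Filter Topology

set_option maxHeartbeats 1000000

namespace OUJCGF


lemma core_integral {β a : ℝ} (hβ : 0 < β) :
    IntegrableOn (fun u => Real.exp (-(β * u)) * (u - a)) (Ioi a) ∧
      ∫ u in Ioi a, Real.exp (-(β * u)) * (u - a) = Real.exp (-(β * a)) / β ^ 2 := by
  set G : ℝ → ℝ := fun u => (-(1/β)) * (u * Real.exp (-(β*u)))
      + (a/β - 1/β^2) * Real.exp (-(β*u)) with hG
  have hderiv : ∀ u ∈ Ici a, HasDerivAt G (Real.exp (-(β*u)) * (u - a)) u := by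
    intro u _
    have h1 : HasDerivAt (fun u : ℝ => -(β*u)) (-β) u := by
      have h := ((hasDerivAt_id u).const_mul β).neg
      simp only [mul_one] at h
      exact h
    have he : HasDerivAt (fun u : ℝ => Real.exp (-(β*u))) (Real.exp (-(β*u)) * (-β)) u := h1.exp
    have hue : HasDerivAt (fun u : ℝ => u * Real.exp (-(β*u)))
        (1 * Real.exp (-(β*u)) + u * (Real.exp (-(β*u)) * (-β))) u :=
      (hasDerivAt_id u).mul he
    have h2 := (hue.const_mul (-(1/β))).add (he.const_mul (a/β - 1/β^2))
    refine h2.congr_deriv ?_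
    have hβ0 : β ≠ 0 := hβ.ne'
    field_simp
    ring
  have hlim1 : Tendsto (fun u : ℝ => u * Real.exp (-(β*u))) atTop (𝓝 0) := by
    have h0 : Tendsto (fun y : ℝ => y * Real.exp (-y)) atTop (𝓝 0) := by
      simpa using tendsto_pow_mul_exp_neg_atTop_nhds_zero 1
    have hb : Tendsto (fun u : ℝ => β * u) atTop atTop :=
      Tendsto.const_mul_atTop hβ tendsto_id
    have := (h0.comp hb).const_mul (1/β)
    simp only [mul_zero] at this
    convert this using 2 with u
    simp only [Function.comp_apply]
    field_simp
  have hlim2 : Tendsto (fun u : ℝ => Real.exp (-(β*u))) atTop (𝓝 0) := by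
    have hb : Tendsto (fun u : ℝ => β * u) atTop atTop :=
      Tendsto.const_mul_atTop hβ tendsto_id
    exact Real.tendsto_exp_neg_atTop_nhds_zero.comp hb
  have htend : Tendsto G atTop (𝓝 0) := by
    have h5 := (hlim1.const_mul (-(1/β))).add (hlim2.const_mul (a/β - 1/β^2))
    simp only [mul_zero, add_zero] at h5
    exact h5
  have hnn : ∀ u ∈ Ioi a, 0 ≤ Real.exp (-(β*u)) * (u - a) := by
    intro u hu
    have h2 : 0 < Real.exp (-(β*u)) := Real.exp_pos _
    have h3 : (0:ℝ) ≤ u - a := by have : a < u := hu; linarith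
    positivity
  refine ⟨integrableOn_Ioi_deriv_of_nonneg' hderiv hnn htend, ?_⟩
  rw [integral_Ioi_of_hasDerivAt_of_nonneg' hderiv hnn htend]
  simp only [hG]
  field_simp
  ring

lemma H_int {β a : ℝ} (hβ : 0 < β) :
    Integrable (fun u => Real.exp (-(β*u)) * max 0 (u - a)) ∧
      ∫ u, Real.exp (-(β*u)) * max 0 (u - a) = Real.exp (-(β*a)) / β^2 := by
  have heq : (fun u => Real.exp (-(β*u)) * max 0 (u - a))
      = Set.indicator (Ioi a) (fun u => Real.exp (-(β*u)) * (u - a)) := by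
    funext u
    by_cases h : a < u
    · rw [Set.indicator_of_mem (mem_Ioi.2 h), max_eq_right (by linarith)]
    · push_neg at h
      rw [Set.indicator_of_notMem (by simpa using h), max_eq_left (by linarith), mul_zero]
  obtain ⟨hint, hval⟩ := core_integral (a := a) hβ
  rw [heq]
  exact ⟨(integrable_indicator_iff measurableSet_Ioi).2 hint,
    by rw [integral_indicator measurableSet_Ioi]; exact hval⟩




noncomputable def gfun (c lam x0 t0 : ℝ) (p : ℝ × ℝ) : ℝ :=
  if p.2 ≤ t0 ∧ |p.1 - x0| ≤ c * (t0 - p.2) then Real.exp (-(lam * (t0 - p.2))) else 0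

lemma measurable_gfun (c lam x0 t0 : ℝ) : Measurable (gfun c lam x0 t0) := by
  unfold gfun
  apply Measurable.ite
  · exact MeasurableSet.inter (measurableSet_le measurable_snd measurable_const)
      (measurableSet_le ((measurable_fst.sub measurable_const).abs)
        ((measurable_const.sub measurable_snd).const_mul c))
  · exact Real.measurable_exp.comp (((measurable_const.sub measurable_snd).const_mul lam).neg)
  · exact measurable_const

lemma gfun_nonneg (c lam x0 t0 : ℝ) (p : ℝ × ℝ) : 0 ≤ gfun c lam x0 t0 p := by
  unfold gfun; split_ifs
  · exact (Real.exp_pos _).le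
  · exact le_rfl

lemma ite_mul_ite (P Q : Prop) [Decidable P] [Decidable Q] (a b : ℝ) :
    (if P then a else 0) * (if Q then b else 0) = if P ∧ Q then a * b else 0 := by
  by_cases hp : P <;> by_cases hq : Q <;> simp [hp, hq]

lemma gfun_split (c lam x0 t0 ξ s : ℝ) :
    gfun c lam x0 t0 (ξ, s)
      = (if s ≤ t0 then Real.exp (-(lam * (t0 - s))) else 0)
        * (if |ξ - x0| ≤ c * (t0 - s) then (1:ℝ) else 0) := by
  rw [ite_mul_ite, mul_one]; rfl

lemma prod_eq (c lam xi ti xj tj ξ s : ℝ) :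
    gfun c lam xi ti (ξ, s) * gfun c lam xj tj (ξ, s)
      = (if s ≤ ti ∧ s ≤ tj then Real.exp (-(lam*(ti - s))) * Real.exp (-(lam*(tj - s))) else 0)
        * Set.indicator (Icc (max (xi - c*(ti - s)) (xj - c*(tj - s)))
            (min (xi + c*(ti - s)) (xj + c*(tj - s)))) (fun _ => (1:ℝ)) ξ := by
  rw [gfun_split, gfun_split, mul_mul_mul_comm, ite_mul_ite, ite_mul_ite, mul_one,
    Set.indicator_apply]
  congr 1
  refine if_congr ?_ rfl rfl
  rw [mem_Icc, max_le_iff, le_min_iff, abs_le, abs_le]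
  constructor
  · rintro ⟨⟨a1, a2⟩, b1, b2⟩
    refine ⟨⟨by linarith, by linarith⟩, by linarith, by linarith⟩
  · rintro ⟨⟨a1, a2⟩, b1, b2⟩
    refine ⟨⟨by linarith, by linarith⟩, by linarith, by linarith⟩




lemma length_formula (A B r ρ : ℝ) :
    min (A + r) (B + ρ) - max (A - r) (B - ρ)
      = min (min (2*r) (2*ρ)) (r + ρ - |A - B|) := by
  rcases le_total A B with hab | hab
  · rw [abs_of_nonpos (by linarith), neg_sub]
    simp only [min_def, max_def]
    split_ifs <;> linarith
  · rw [abs_of_nonneg (by linarith)]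
    simp only [min_def, max_def]
    split_ifs <;> linarith

lemma max_scale {c : ℝ} (hc : 0 < c) (x y : ℝ) :
    max 0 (c*x - y) = c * max 0 (x - y/c) := by
  rcases le_total (c*x - y) 0 with h | h
  · rw [max_eq_left h, max_eq_left, mul_zero]
    rw [sub_nonpos, le_div_iff₀ hc]
    linarith
  · rw [max_eq_right h, max_eq_right]
    · field_simp
    · rw [sub_nonneg, div_le_iff₀ hc]
      linarith

lemma exp_neg_max (p q : ℝ) :
    Real.exp (-(max p q)) = min (Real.exp (-p)) (Real.exp (-q)) := by
  rcases le_total p q with h | h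
  · rw [max_eq_right h, min_eq_right (Real.exp_le_exp.2 (by linarith))]
  · rw [max_eq_left h, min_eq_left (Real.exp_le_exp.2 (by linarith))]

lemma Fval (c lam xi ti xj tj : ℝ) (hc : 0 < c) (s : ℝ) :
    (if s ≤ ti ∧ s ≤ tj then Real.exp (-(lam*(ti - s))) * Real.exp (-(lam*(tj - s))) else 0)
      * max (min (xi + c*(ti - s)) (xj + c*(tj - s))
          - max (xi - c*(ti - s)) (xj - c*(tj - s))) 0
    = 2*c*(Real.exp (-(lam*|ti - tj|)) * (Real.exp (-(2*lam*(min ti tj - s)))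
        * max 0 ((min ti tj - s) - max 0 (|xi - xj| - c*|ti - tj|)/(2*c)))) := by
  by_cases hs : s ≤ min ti tj
  · rw [le_min_iff] at hs
    rw [if_pos hs]
    have hexp : Real.exp (-(lam*(ti - s))) * Real.exp (-(lam*(tj - s)))
        = Real.exp (-(lam*|ti - tj|)) * Real.exp (-(2*lam*(min ti tj - s))) := by
      rw [← Real.exp_add, ← Real.exp_add]
      congr 1
      have hTm : |ti - tj| + 2*(min ti tj) = ti + tj := by
        rcases le_total ti tj with h | h
        · rw [abs_of_nonpos (by linarith), min_eq_left h]; ring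
        · rw [abs_of_nonneg (by linarith), min_eq_right h]; ring
      linear_combination lam * hTm
    have hlen : max (min (xi + c*(ti - s)) (xj + c*(tj - s))
          - max (xi - c*(ti - s)) (xj - c*(tj - s))) 0
        = 2*c* max 0 ((min ti tj - s) - max 0 (|xi - xj| - c*|ti - tj|)/(2*c)) := by
      rw [← max_scale (by linarith : (0:ℝ) < 2*c)]
      rw [length_formula]
      have hD : 0 ≤ |xi - xj| := abs_nonneg _
      have h2c : (0:ℝ) < 2*c := by linarith
      rcases le_total ti tj with h | h
      · rw [min_eq_left h, abs_of_nonpos (by linarith : ti - tj ≤ 0), neg_sub]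
        have p1 : c*s ≤ c*ti := mul_le_mul_of_nonneg_left hs.1 hc.le
        have p2 : c*ti ≤ c*tj := mul_le_mul_of_nonneg_left h hc.le
        simp only [min_def, max_def]
        split_ifs <;> linarith
      · rw [min_eq_right h, abs_of_nonneg (by linarith : 0 ≤ ti - tj)]
        have p1 : c*s ≤ c*tj := mul_le_mul_of_nonneg_left hs.2 hc.le
        have p2 : c*tj ≤ c*ti := mul_le_mul_of_nonneg_left h hc.le
        simp only [min_def, max_def]
        split_ifs <;> linarith
    rw [hexp, hlen]
    ring
  · rw [if_neg (by rw [le_min_iff] at hs; tauto), zero_mul]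
    have h1 : min ti tj - s < 0 := by
      have := not_le.1 hs; linarith
    have h2 : 0 ≤ max 0 (|xi - xj| - c*|ti - tj|)/(2*c) := by positivity
    have h3 : (min ti tj - s) - max 0 (|xi - xj| - c*|ti - tj|)/(2*c) ≤ 0 := by linarith
    rw [max_eq_left h3]
    ring






lemma cross (c lam : ℝ) (hc : 0 < c) (hlam : 0 < lam) (xi ti xj tj : ℝ) :
    Integrable (fun p : ℝ × ℝ => gfun c lam xi ti p * gfun c lam xj tj p) ∧
      ∫ p : ℝ × ℝ, gfun c lam xi ti p * gfun c lam xj tj p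
        = c/(2*lam^2) * min (Real.exp (-(lam * |ti - tj|)))
            (Real.exp (-(lam * |xi - xj| / c))) := by
  set f : ℝ × ℝ → ℝ := fun p => gfun c lam xi ti p * gfun c lam xj tj p with hf
  set a : ℝ := max 0 (|xi - xj| - c*|ti - tj|)/(2*c) with ha
  have ha0 : 0 ≤ a := by positivity
  have hmeasf : Measurable f := (measurable_gfun _ _ _ _).mul (measurable_gfun _ _ _ _)
  have hfnn : ∀ p, 0 ≤ f p := fun p =>
    mul_nonneg (gfun_nonneg _ _ _ _ _) (gfun_nonneg _ _ _ _ _)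
  have hinner : ∀ s : ℝ, Integrable (fun ξ => f (ξ, s)) := by
    intro s
    have heq : (fun ξ => f (ξ, s)) = fun ξ =>
        (if s ≤ ti ∧ s ≤ tj then Real.exp (-(lam*(ti - s))) * Real.exp (-(lam*(tj - s))) else 0)
        * Set.indicator (Icc (max (xi - c*(ti - s)) (xj - c*(tj - s)))
            (min (xi + c*(ti - s)) (xj + c*(tj - s)))) (fun _ => (1:ℝ)) ξ := by
      funext ξ; exact prod_eq ..
    rw [heq]
    exact (((integrable_indicator_iff measurableSet_Icc).2
      (integrableOn_const measure_Icc_lt_top.ne))).const_mul _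
  have hval : ∀ s : ℝ, (∫ ξ, f (ξ, s))
      = 2*c*(Real.exp (-(lam*|ti - tj|)) * (Real.exp (-(2*lam*(min ti tj - s)))
        * max 0 ((min ti tj - s) - a))) := by
    intro s
    calc ∫ ξ, f (ξ, s)
        = ∫ ξ, (if s ≤ ti ∧ s ≤ tj then
              Real.exp (-(lam*(ti - s))) * Real.exp (-(lam*(tj - s))) else 0)
            * Set.indicator (Icc (max (xi - c*(ti - s)) (xj - c*(tj - s)))
              (min (xi + c*(ti - s)) (xj + c*(tj - s)))) (fun _ => (1:ℝ)) ξ := by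
          congr 1; funext ξ; exact prod_eq ..
      _ = (if s ≤ ti ∧ s ≤ tj then
              Real.exp (-(lam*(ti - s))) * Real.exp (-(lam*(tj - s))) else 0)
            * ∫ ξ, Set.indicator (Icc (max (xi - c*(ti - s)) (xj - c*(tj - s)))
              (min (xi + c*(ti - s)) (xj + c*(tj - s)))) (fun _ => (1:ℝ)) ξ :=
          integral_const_mul _ _
      _ = (if s ≤ ti ∧ s ≤ tj then
              Real.exp (-(lam*(ti - s))) * Real.exp (-(lam*(tj - s))) else 0)
            * max (min (xi + c*(ti - s)) (xj + c*(tj - s))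
                - max (xi - c*(ti - s)) (xj - c*(tj - s))) 0 := by
          rw [integral_indicator measurableSet_Icc]
          simp [Real.volume_Icc, ENNReal.toReal_ofReal']
      _ = _ := Fval c lam xi ti xj tj hc s
  have hH := H_int (β := 2*lam) (a := a) (by positivity)
  have hcomp : Integrable (fun s : ℝ =>
      Real.exp (-(2*lam*(min ti tj - s))) * max 0 ((min ti tj - s) - a)) :=
    hH.1.comp_sub_left (min ti tj)
  have hFint : Integrable (fun s : ℝ =>
      2*c*(Real.exp (-(lam*|ti - tj|)) * (Real.exp (-(2*lam*(min ti tj - s)))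
        * max 0 ((min ti tj - s) - a)))) :=
    (hcomp.const_mul _).const_mul _
  have hintf : Integrable f := by
    rw [show (volume : Measure (ℝ × ℝ)) = (volume : Measure ℝ).prod volume from
      Measure.volume_eq_prod ℝ ℝ]
    refine (integrable_prod_iff' hmeasf.aestronglyMeasurable).2 ⟨ae_of_all _ hinner, ?_⟩
    have heqn : (fun s => ∫ ξ, ‖f (ξ, s)‖)
        = fun s => 2*c*(Real.exp (-(lam*|ti - tj|)) * (Real.exp (-(2*lam*(min ti tj - s)))
          * max 0 ((min ti tj - s) - a))) := by
      funext s
      have : (∫ ξ, ‖f (ξ, s)‖) = ∫ ξ, f (ξ, s) := by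
        congr 1; funext ξ; exact Real.norm_of_nonneg (hfnn _)
      rw [this, hval s]
    rw [heqn]
    exact hFint
  refine ⟨hintf, ?_⟩
  have hswap : (∫ p : ℝ × ℝ, f p) = ∫ s : ℝ, ∫ ξ : ℝ, f (ξ, s) := by
    rw [show (volume : Measure (ℝ × ℝ)) = (volume : Measure ℝ).prod volume from
      Measure.volume_eq_prod ℝ ℝ]
    exact integral_prod_symm f (by rw [← Measure.volume_eq_prod]; exact hintf)
  have hsub : (∫ s : ℝ, Real.exp (-(2*lam*(min ti tj - s))) * max 0 ((min ti tj - s) - a))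
      = Real.exp (-(2*lam*a))/(2*lam)^2 := by
    have := integral_sub_left_eq_self
      (fun u : ℝ => Real.exp (-(2*lam*u)) * max 0 (u - a)) volume (min ti tj)
    rw [show (fun s : ℝ => Real.exp (-(2*lam*(min ti tj - s))) * max 0 ((min ti tj - s) - a))
      = fun s : ℝ => (fun u : ℝ => Real.exp (-(2*lam*u)) * max 0 (u - a)) (min ti tj - s)
      from rfl]
    rw [this, hH.2]
  have hEE : Real.exp (-(lam*|ti - tj|)) * Real.exp (-(2*lam*a))
      = min (Real.exp (-(lam * |ti - tj|))) (Real.exp (-(lam * |xi - xj| / c))) := by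
    rw [← Real.exp_add, ← exp_neg_max]
    congr 1
    have h2a : 2*lam*a = max 0 (lam * |xi - xj| / c - lam * |ti - tj|) := by
      rw [ha]
      rcases le_total (|xi - xj| - c*|ti - tj|) 0 with h | h
      · rw [max_eq_left h, max_eq_left]
        · simp
        · rw [sub_nonpos, div_le_iff₀ hc]
          nlinarith
      · rw [max_eq_right h, max_eq_right]
        · field_simp
        · rw [sub_nonneg, le_div_iff₀ hc]
          nlinarith
    rw [h2a]
    rcases le_total (lam * |ti - tj|) (lam * |xi - xj| / c) with h | h
    · rw [max_eq_right (by linarith : lam * |xi - xj| / c - lam * |ti - tj| ≥ 0), max_eq_right h]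
      ring
    · rw [max_eq_left (by linarith : lam * |xi - xj| / c - lam * |ti - tj| ≤ 0), max_eq_left h]
      ring
  rw [hswap]
  calc (∫ s : ℝ, ∫ ξ : ℝ, f (ξ, s))
      = ∫ s : ℝ, 2*c*(Real.exp (-(lam*|ti - tj|)) * (Real.exp (-(2*lam*(min ti tj - s)))
          * max 0 ((min ti tj - s) - a))) := by simp only [hval]
    _ = 2*c*(Real.exp (-(lam*|ti - tj|)) * ∫ s : ℝ, Real.exp (-(2*lam*(min ti tj - s)))
          * max 0 ((min ti tj - s) - a)) := by
        rw [integral_const_mul, integral_const_mul]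
    _ = 2*c*(Real.exp (-(lam*|ti - tj|)) * (Real.exp (-(2*lam*a))/(2*lam)^2)) := by
        rw [hsub]
    _ = _ := by
        rw [show 2*c*(Real.exp (-(lam*|ti - tj|)) * (Real.exp (-(2*lam*a))/(2*lam)^2))
          = (Real.exp (-(lam*|ti - tj|)) * Real.exp (-(2*lam*a))) * (2*c/(2*lam)^2)
          from by ring, hEE]
        rw [show (2*c/(2*lam)^2) = c/(2*lam^2) from by ring]
        ring

lemma single (c lam : ℝ) (hc : 0 < c) (hlam : 0 < lam) (xi ti : ℝ) :
    Integrable (gfun c lam xi ti) ∧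
      (∫ p : ℝ × ℝ, gfun c lam xi ti p) = 2*c/lam^2 := by
  have hsplit : ∀ ξ s : ℝ, gfun c lam xi ti (ξ, s)
      = (if s ≤ ti then Real.exp (-(lam*(ti - s))) else 0)
        * Set.indicator (Icc (xi - c*(ti - s)) (xi + c*(ti - s))) (fun _ => (1:ℝ)) ξ := by
    intro ξ s
    rw [gfun_split]
    congr 1
    rw [Set.indicator_apply]
    refine if_congr ?_ rfl rfl
    rw [mem_Icc, abs_le]
    constructor <;> rintro ⟨h1, h2⟩ <;> exact ⟨by linarith, by linarith⟩
  have hinner : ∀ s : ℝ, Integrable (fun ξ => gfun c lam xi ti (ξ, s)) := by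
    intro s
    rw [show (fun ξ => gfun c lam xi ti (ξ, s)) = fun ξ =>
        (if s ≤ ti then Real.exp (-(lam*(ti - s))) else 0)
        * Set.indicator (Icc (xi - c*(ti - s)) (xi + c*(ti - s))) (fun _ => (1:ℝ)) ξ
      from funext fun ξ => hsplit ξ s]
    exact (((integrable_indicator_iff measurableSet_Icc).2
      (integrableOn_const measure_Icc_lt_top.ne))).const_mul _
  have hval : ∀ s : ℝ, (∫ ξ, gfun c lam xi ti (ξ, s))
      = 2*c*(Real.exp (-(lam*(ti - s))) * max 0 ((ti - s) - 0)) := by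
    intro s
    calc ∫ ξ, gfun c lam xi ti (ξ, s)
        = ∫ ξ, (if s ≤ ti then Real.exp (-(lam*(ti - s))) else 0)
            * Set.indicator (Icc (xi - c*(ti - s)) (xi + c*(ti - s))) (fun _ => (1:ℝ)) ξ := by
          congr 1; funext ξ; exact hsplit ξ s
      _ = (if s ≤ ti then Real.exp (-(lam*(ti - s))) else 0)
            * max (xi + c*(ti - s) - (xi - c*(ti - s))) 0 := by
          rw [integral_const_mul, integral_indicator measurableSet_Icc]
          simp [Real.volume_Icc, ENNReal.toReal_ofReal']
      _ = 2*c*(Real.exp (-(lam*(ti - s))) * max 0 ((ti - s) - 0)) := by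
          by_cases hs : s ≤ ti
          · rw [if_pos hs, max_eq_left (by nlinarith : (0:ℝ) ≤ xi + c*(ti - s) - (xi - c*(ti - s))),
              max_eq_right (by linarith : (0:ℝ) ≤ (ti - s) - 0)]
            ring
          · push_neg at hs
            rw [if_neg (by linarith), zero_mul,
              max_eq_left (by linarith : (ti - s) - 0 ≤ 0)]
            ring
  have hH := H_int (β := lam) (a := (0:ℝ)) hlam
  have hcomp : Integrable (fun s : ℝ => Real.exp (-(lam*(ti - s))) * max 0 ((ti - s) - 0)) :=
    hH.1.comp_sub_left ti
  have hFint : Integrable (fun s : ℝ =>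
      2*c*(Real.exp (-(lam*(ti - s))) * max 0 ((ti - s) - 0))) := hcomp.const_mul _
  have hmeasf : Measurable (gfun c lam xi ti) := measurable_gfun _ _ _ _
  have hintf : Integrable (gfun c lam xi ti) := by
    rw [show (volume : Measure (ℝ × ℝ)) = (volume : Measure ℝ).prod volume from
      Measure.volume_eq_prod ℝ ℝ]
    refine (integrable_prod_iff' hmeasf.aestronglyMeasurable).2 ⟨ae_of_all _ hinner, ?_⟩
    have heqn : (fun s => ∫ ξ, ‖gfun c lam xi ti (ξ, s)‖)
        = fun s => 2*c*(Real.exp (-(lam*(ti - s))) * max 0 ((ti - s) - 0)) := by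
      funext s
      have : (∫ ξ, ‖gfun c lam xi ti (ξ, s)‖) = ∫ ξ, gfun c lam xi ti (ξ, s) := by
        congr 1; funext ξ; exact Real.norm_of_nonneg (gfun_nonneg _ _ _ _ _)
      rw [this, hval s]
    rw [heqn]
    exact hFint
  refine ⟨hintf, ?_⟩
  have hswap : (∫ p : ℝ × ℝ, gfun c lam xi ti p) = ∫ s : ℝ, ∫ ξ : ℝ, gfun c lam xi ti (ξ, s) := by
    rw [show (volume : Measure (ℝ × ℝ)) = (volume : Measure ℝ).prod volume from
      Measure.volume_eq_prod ℝ ℝ]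
    exact integral_prod_symm _ (by rw [← Measure.volume_eq_prod]; exact hintf)
  have hsub : (∫ s : ℝ, Real.exp (-(lam*(ti - s))) * max 0 ((ti - s) - 0))
      = Real.exp (-(lam*0))/lam^2 := by
    have := integral_sub_left_eq_self
      (fun u : ℝ => Real.exp (-(lam*u)) * max 0 (u - 0)) volume ti
    rw [show (fun s : ℝ => Real.exp (-(lam*(ti - s))) * max 0 ((ti - s) - 0))
      = fun s : ℝ => (fun u : ℝ => Real.exp (-(lam*u)) * max 0 (u - 0)) (ti - s) from rfl]
    rw [this, hH.2]
  rw [hswap]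
  calc (∫ s : ℝ, ∫ ξ : ℝ, gfun c lam xi ti (ξ, s))
      = ∫ s : ℝ, 2*c*(Real.exp (-(lam*(ti - s))) * max 0 ((ti - s) - 0)) := by
        simp only [hval]
    _ = 2*c*(Real.exp (-(lam*0))/lam^2) := by rw [integral_const_mul, hsub]
    _ = 2*c/lam^2 := by simp; ring


end OUJCGF

open OUJCGF in
/-- Joint cumulant generating function of n values of the canonical Gaussian OU∧ process:
`C{θ ‡ (Y_{t₁}(x₁),…,Y_{t_n}(x_n))} = i(2cμ/λ²) Σ θ̃ᵢ − (cτ²/(4λ²)) Σᵢⱼ θ̃ᵢθ̃ⱼ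
min(e^{-λ|tᵢ-tⱼ|}, e^{-λ|xᵢ-xⱼ|/c})`, where the JCGF is `∫ C{θ h_A(ξ,s) ‡ L'} dξ ds`
with Gaussian seed CGF `C{u ‡ L'} = iμu − τ²u²/2`.  In particular the characteristic
function is that of a multivariate normal vector with mean `2cμ/λ²` and covariance
`Σᵢⱼ = (cτ²/(2λ²)) min(e^{-λ|tᵢ-tⱼ|}, e^{-λ|xᵢ-xⱼ|/c})`. -/
theorem canonical_OUwedge_gaussian_JCGF
    (lam c μ τ θ : ℝ) (hlam : 0 < lam) (hc : 0 < c)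
    (n : ℕ) (x t θv : Fin n → ℝ)
    (θt : Fin n → ℝ) (hθt : θt = fun i => θ * θv i)
    (A : Set (ℝ × ℝ)) (hA : A = {p : ℝ × ℝ | p.2 ≤ 0 ∧ |p.1| ≤ c * (-p.2)})
    (h : ℝ × ℝ → ℝ)
    (hh : h = fun p => ∑ i, Set.indicator A
      (fun _ => Real.exp (-(lam * (t i - p.2)))) (p.1 - x i, p.2 - t i) * θv i) :
    (∫ p : ℝ × ℝ,
        (Complex.I * ((μ * (θ * h p) : ℝ) : ℂ) - ((τ ^ 2 * (θ * h p) ^ 2 / 2 : ℝ) : ℂ))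
      = Complex.I * (((2 * c * μ / lam ^ 2) * ∑ i, θt i : ℝ) : ℂ)
        - (((c * τ ^ 2 / (4 * lam ^ 2)) * ∑ i, ∑ j, θt i * θt j *
            min (Real.exp (-(lam * |t i - t j|)))
                (Real.exp (-(lam * |x i - x j| / c))) : ℝ) : ℂ))
    ∧ Complex.exp (∫ p : ℝ × ℝ,
        (Complex.I * ((μ * (θ * h p) : ℝ) : ℂ) - ((τ ^ 2 * (θ * h p) ^ 2 / 2 : ℝ) : ℂ)))
      = Complex.exp (Complex.I * (((2 * c * μ / lam ^ 2) * ∑ i, θt i : ℝ) : ℂ)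
        - (((1 / 2) * ∑ i, ∑ j, θt i * θt j * ((c * τ ^ 2 / (2 * lam ^ 2)) *
            min (Real.exp (-(lam * |t i - t j|)))
                (Real.exp (-(lam * |x i - x j| / c)))) : ℝ) : ℂ)) := by
  have hterm : ∀ (i : Fin n) (p : ℝ × ℝ),
      Set.indicator {q : ℝ × ℝ | q.2 ≤ 0 ∧ |q.1| ≤ c * (-q.2)}
        (fun _ => Real.exp (-(lam * (t i - p.2)))) (p.1 - x i, p.2 - t i)
        = gfun c lam (x i) (t i) p := by
    intro i p
    rw [Set.indicator_apply, gfun]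
    simp only [Set.mem_setOf_eq]
    refine if_congr ?_ rfl rfl
    constructor
    · rintro ⟨h1, h2⟩
      rw [neg_sub] at h2
      exact ⟨by linarith, h2⟩
    · rintro ⟨h1, h2⟩
      rw [neg_sub]
      exact ⟨by linarith, h2⟩
  simp only [hh, hA, hθt, hterm]
  have hsing := fun i : Fin n => single c lam hc hlam (x i) (t i)
  have hcro := fun i j : Fin n => cross c lam hc hlam (x i) (t i) (x j) (t j)
  have hInt_h : Integrable (fun p : ℝ × ℝ => ∑ i, gfun c lam (x i) (t i) p * θv i) :=
    integrable_finset_sum _ (fun i _ => ((hsing i).1.mul_const _))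
  have hIh : (∫ p : ℝ × ℝ, ∑ i, gfun c lam (x i) (t i) p * θv i)
      = ∑ i, (2*c/lam^2) * θv i := by
    rw [integral_finset_sum _ (fun i _ => ((hsing i).1.mul_const _))]
    refine Finset.sum_congr rfl fun i _ => ?_
    rw [integral_mul_const, (hsing i).2]
  have hsq : ∀ p : ℝ × ℝ, (∑ i, gfun c lam (x i) (t i) p * θv i)^2
      = ∑ i, ∑ j, (gfun c lam (x i) (t i) p * gfun c lam (x j) (t j) p) * (θv i * θv j) := by
    intro p
    rw [sq, Finset.sum_mul_sum]
    exact Finset.sum_congr rfl fun i _ => Finset.sum_congr rfl fun j _ => by ring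
  have hInt_h2 : Integrable (fun p : ℝ × ℝ => (∑ i, gfun c lam (x i) (t i) p * θv i)^2) := by
    have : (fun p : ℝ × ℝ => (∑ i, gfun c lam (x i) (t i) p * θv i)^2)
        = fun p => ∑ i, ∑ j, (gfun c lam (x i) (t i) p * gfun c lam (x j) (t j) p)
            * (θv i * θv j) := funext hsq
    rw [this]
    exact integrable_finset_sum _ (fun i _ =>
      integrable_finset_sum _ (fun j _ => ((hcro i j).1.mul_const _)))
  have hIh2 : (∫ p : ℝ × ℝ, (∑ i, gfun c lam (x i) (t i) p * θv i)^2)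
      = ∑ i, ∑ j, (c/(2*lam^2) * min (Real.exp (-(lam * |t i - t j|)))
          (Real.exp (-(lam * |x i - x j| / c)))) * (θv i * θv j) := by
    have h0 : (fun p : ℝ × ℝ => (∑ i, gfun c lam (x i) (t i) p * θv i)^2)
        = fun p => ∑ i, ∑ j, (gfun c lam (x i) (t i) p * gfun c lam (x j) (t j) p)
            * (θv i * θv j) := funext hsq
    rw [h0, integral_finset_sum _ (fun i _ =>
      integrable_finset_sum _ (fun j _ => ((hcro i j).1.mul_const _)))]
    refine Finset.sum_congr rfl fun i _ => ?_
    rw [integral_finset_sum _ (fun j _ => ((hcro i j).1.mul_const _))]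
    refine Finset.sum_congr rfl fun j _ => ?_
    rw [integral_mul_const, (hcro i j).2]
  have e1 : (fun p : ℝ × ℝ =>
        Complex.I * ((μ * (θ * ∑ i, gfun c lam (x i) (t i) p * θv i) : ℝ) : ℂ))
      = fun p => (Complex.I * ((μ * θ : ℝ) : ℂ))
          * (((∑ i, gfun c lam (x i) (t i) p * θv i : ℝ)) : ℂ) := by
    funext p; push_cast; ring
  have e2 : (fun p : ℝ × ℝ =>
        ((τ ^ 2 * (θ * ∑ i, gfun c lam (x i) (t i) p * θv i) ^ 2 / 2 : ℝ) : ℂ))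
      = fun p => (((τ^2 * θ^2 / 2 : ℝ)) : ℂ)
          * (((∑ i, gfun c lam (x i) (t i) p * θv i)^2 : ℝ) : ℂ) := by
    funext p; push_cast; ring
  have i1 : Integrable (fun p : ℝ × ℝ =>
      Complex.I * ((μ * (θ * ∑ i, gfun c lam (x i) (t i) p * θv i) : ℝ) : ℂ)) := by
    rw [e1]; exact (hInt_h.ofReal).const_mul _
  have i2 : Integrable (fun p : ℝ × ℝ =>
      ((τ ^ 2 * (θ * ∑ i, gfun c lam (x i) (t i) p * θv i) ^ 2 / 2 : ℝ) : ℂ)) := by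
    rw [e2]; exact (hInt_h2.ofReal).const_mul _
  have key : (∫ p : ℝ × ℝ,
      (Complex.I * ((μ * (θ * ∑ i, gfun c lam (x i) (t i) p * θv i) : ℝ) : ℂ)
        - ((τ ^ 2 * (θ * ∑ i, gfun c lam (x i) (t i) p * θv i) ^ 2 / 2 : ℝ) : ℂ)))
      = Complex.I * (((2 * c * μ / lam ^ 2) * ∑ i, θ * θv i : ℝ) : ℂ)
        - (((c * τ ^ 2 / (4 * lam ^ 2)) * ∑ i, ∑ j, (θ * θv i) * (θ * θv j) *
            min (Real.exp (-(lam * |t i - t j|)))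
                (Real.exp (-(lam * |x i - x j| / c))) : ℝ) : ℂ) := by
    rw [integral_sub i1 i2]
    have hr1 : μ * θ * (∑ i, (2*c/lam^2) * θv i)
        = (2 * c * μ / lam ^ 2) * ∑ i, θ * θv i := by
      rw [Finset.mul_sum, Finset.mul_sum]
      exact Finset.sum_congr rfl fun i _ => by ring
    have hr2 : (τ^2 * θ^2 / 2) * (∑ i, ∑ j, (c/(2*lam^2) * min (Real.exp (-(lam * |t i - t j|)))
          (Real.exp (-(lam * |x i - x j| / c)))) * (θv i * θv j))
        = (c * τ ^ 2 / (4 * lam ^ 2)) * ∑ i, ∑ j, (θ * θv i) * (θ * θv j) *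
            min (Real.exp (-(lam * |t i - t j|)))
                (Real.exp (-(lam * |x i - x j| / c))) := by
      rw [Finset.mul_sum, Finset.mul_sum]
      refine Finset.sum_congr rfl fun i _ => ?_
      rw [Finset.mul_sum, Finset.mul_sum]
      exact Finset.sum_congr rfl fun j _ => by ring
    congr 1
    · rw [e1, integral_const_mul,
        show (∫ a : ℝ × ℝ, ((∑ i, gfun c lam (x i) (t i) a * θv i : ℝ) : ℂ))
          = ((∑ i, (2*c/lam^2) * θv i : ℝ) : ℂ) from by rw [← hIh]; exact integral_ofReal,
        ← hr1]
      push_cast; ring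
    · rw [e2, integral_const_mul,
        show (∫ a : ℝ × ℝ, (((∑ i, gfun c lam (x i) (t i) a * θv i)^2 : ℝ) : ℂ))
          = ((∑ i, ∑ j, (c/(2*lam^2) * min (Real.exp (-(lam * |t i - t j|)))
              (Real.exp (-(lam * |x i - x j| / c)))) * (θv i * θv j) : ℝ) : ℂ) from by
            rw [← hIh2]; exact integral_ofReal,
        ← hr2]
      push_cast; ring
  refine ⟨key, ?_⟩
  rw [key]
  congr 1
  congr 1
  have hr3 : (c * τ ^ 2 / (4 * lam ^ 2)) * ∑ i, ∑ j, (θ * θv i) * (θ * θv j) *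
        min (Real.exp (-(lam * |t i - t j|))) (Real.exp (-(lam * |x i - x j| / c)))
      = (1 / 2) * ∑ i, ∑ j, (θ * θv i) * (θ * θv j) * ((c * τ ^ 2 / (2 * lam ^ 2)) *
        min (Real.exp (-(lam * |t i - t j|))) (Real.exp (-(lam * |x i - x j| / c)))) := by
    rw [Finset.mul_sum, Finset.mul_sum]
    refine Finset.sum_congr rfl fun i _ => ?_
    rw [Finset.mul_sum, Finset.mul_sum]
    exact Finset.sum_congr rfl fun j _ => by ring
  rw [hr3]
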